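/- The pairs f, g: S → ℂ satisfying f(xy) + μ(y)·f(σ(y)x) = 2f(x)g(y) for all x, y ∈ S are exactly the following: (1) f = 0 and g arbitrary; (2) f = λχ + δχ* and g = (χ + χ*)/2, where χ: S → ℂ is a nonzero multiplicative function and λ, δ ∈ ℂ are constants with (λ, δ) ≠ (0, 0); (3) f = χ·(c + A) and g = χ on S \ I_χ while f = 0 and g = 0 on I_χ, where c ∈ ℂ is a constant, χ: S → ℂ is a nonzero multiplicative function with χ* = χ, and A: S \ I_χ → ℂ is a nonzero additive function with A∘σ = −A on S \ I_χ. -/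

import Mathlib

private lemma wilson_aux_prod {S : Type*} [Semigroup S]
    (hSq : Subsemigroup.closure {x : S | ∃ y : S, x = y * y} = ⊤) (p : S) :
    ∃ u v : S, p = u * v := by
  have hp : p ∈ Subsemigroup.closure {x : S | ∃ y : S, x = y * y} := by
    rw [hSq]; trivial
  induction hp using Subsemigroup.closure_induction with
  | mem a ha => obtain ⟨y, rfl⟩ := ha; exact ⟨y, y, rfl⟩
  | mul a b _ _ _ _ => exact ⟨a, b, rfl⟩

private lemma wilson_aux_factor {S : Type*} [Semigroup S]
    (hSq : Subsemigroup.closure {x : S | ∃ y : S, x = y * y} = ⊤)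
    (χ : S → ℂ) (hχ : ∀ x y : S, χ (x * y) = χ x * χ y) (p : S) (hp : χ p = 0) :
    ∃ u v : S, p = u * v ∧ χ u = 0 ∧ χ v = 0 := by
  have hmem : p ∈ Subsemigroup.closure {x : S | ∃ y : S, x = y * y} := by
    rw [hSq]; trivial
  induction hmem using Subsemigroup.closure_induction with
  | mem a ha =>
    obtain ⟨y, rfl⟩ := ha
    have : χ y = 0 := by
      have := hχ y y; rw [hp] at this
      exact mul_self_eq_zero.mp this.symm
    exact ⟨y, y, rfl, this, this⟩
  | mul a b _ _ iha ihb =>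
    have hab : χ a * χ b = 0 := by rw [← hχ]; exact hp
    rcases mul_eq_zero.mp hab with h | h
    · obtain ⟨u, v, rfl, hu, hv⟩ := iha h
      exact ⟨u, v * b, by rw [mul_assoc], hu, by rw [hχ, hv, zero_mul]⟩
    · obtain ⟨u, v, rfl, hu, hv⟩ := ihb h
      exact ⟨a * u, v, by rw [mul_assoc], by rw [hχ, hu, mul_zero], hv⟩

/-- sine addition law structure: `g(xy) = g x g y + κ h x h y`. -/
private lemma wilson_aux_sine {S : Type*} [Semigroup S] (g h : S → ℂ)
    (hs : ∀ x y : S, h (x * y) = h x * g y + h y * g x) (p : S) (hp : h p ≠ 0) :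
    ∃ κ : ℂ, ∀ x y : S, g (x * y) = g x * g y + κ * (h x * h y) := by
  have S1 : ∀ x y z : S, h x * (g (y * z) - g y * g z) = h z * (g (x * y) - g x * g y) := by
    intro x y z
    have e1 : h (x * (y * z)) = (h x * g y + h y * g x) * g z + h z * g (x * y) := by
      rw [← mul_assoc, hs (x * y) z, hs x y]
    have e2 : h (x * (y * z)) = h x * g (y * z) + (h y * g z + h z * g y) * g x := by
      rw [hs x (y * z), hs y z]
    linear_combination e1 - e2
  refine ⟨(g (p * p) - g p * g p) / (h p * h p), fun x y => ?_⟩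
  have h1 := S1 x y p
  have h2 := S1 y p p
  field_simp
  linear_combination -(h p * h1) - h x * h2


private lemma wilson_I1 {S : Type*} [Semigroup S]
    (σ : S → S) (hσmul : ∀ x y : S, σ (x * y) = σ x * σ y) (hσinv : ∀ x : S, σ (σ x) = x)
    (μ : S → ℂ) (hμmul : ∀ x y : S, μ (x * y) = μ x * μ y)
    (hμ1 : ∀ x : S, μ x * μ (σ x) = 1)
    (f g : S → ℂ)
    (hW : ∀ x y : S, f (x * y) + μ y * f (σ y * x) = 2 * f x * g y) :
    ∀ x y : S, f (x * y) - μ (x * y) * f (σ (x * y))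
      = 2 * f x * g y - 2 * (μ y * f (σ y)) * g x := by
  intro x y
  have h1 := hW (σ y) x
  have h2 := hW x y
  rw [← hσmul] at h1
  have h3 : μ (x * y) = μ x * μ y := hμmul x y
  linear_combination h2 - μ y * h1 - f (σ (x * y)) * h3

private lemma wilson_I2 {S : Type*} [Semigroup S]
    (σ : S → S) (hσmul : ∀ x y : S, σ (x * y) = σ x * σ y) (hσinv : ∀ x : S, σ (σ x) = x)
    (μ : S → ℂ) (hμmul : ∀ x y : S, μ (x * y) = μ x * μ y)
    (hμ1 : ∀ x : S, μ x * μ (σ x) = 1)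
    (f g : S → ℂ)
    (hW : ∀ x y : S, f (x * y) + μ y * f (σ y * x) = 2 * f x * g y) :
    ∀ x y : S, μ (x * y) * f (σ (x * y)) - f (x * y)
      = 2 * (μ x * f (σ x)) * (μ y * g (σ y)) - 2 * f y * (μ x * g (σ x)) := by
  intro x y
  have h1 := wilson_I1 σ hσmul hσinv μ hμmul hμ1 f g hW (σ x) (σ y)
  rw [← hσmul, hσinv, hσinv] at h1
  have e1 : μ (x * y) * μ (σ (x * y)) = 1 := hμ1 (x * y)
  have e2 : μ y * μ (σ y) = 1 := hμ1 y
  have e3 : μ (x * y) = μ x * μ y := hμmul x y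
  linear_combination μ (x * y) * h1 + f (x * y) * e1 +
    (2 * f (σ x) * g (σ y) - 2 * f y * g (σ x) * μ (σ y)) * e3 -
    2 * f y * g (σ x) * μ x * e2

private lemma wilson_E {S : Type*} [Semigroup S]
    (σ : S → S) (hσmul : ∀ x y : S, σ (x * y) = σ x * σ y) (hσinv : ∀ x : S, σ (σ x) = x)
    (μ : S → ℂ) (hμmul : ∀ x y : S, μ (x * y) = μ x * μ y)
    (hμ1 : ∀ x : S, μ x * μ (σ x) = 1)
    (f g : S → ℂ)
    (hW : ∀ x y : S, f (x * y) + μ y * f (σ y * x) = 2 * f x * g y) :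
    ∀ x y : S, f x * g y - (μ y * f (σ y)) * g x
      = f y * (μ x * g (σ x)) - (μ x * f (σ x)) * (μ y * g (σ y)) := by
  intro x y
  have h1 := wilson_I1 σ hσmul hσinv μ hμmul hμ1 f g hW x y
  have h2 := wilson_I2 σ hσmul hσinv μ hμmul hμ1 f g hW x y
  linear_combination (-h1 - h2) / 2

private lemma wilson_Wstar {S : Type*} [Semigroup S]
    (σ : S → S) (hσmul : ∀ x y : S, σ (x * y) = σ x * σ y) (hσinv : ∀ x : S, σ (σ x) = x)
    (μ : S → ℂ) (hμmul : ∀ x y : S, μ (x * y) = μ x * μ y)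
    (hμ1 : ∀ x : S, μ x * μ (σ x) = 1)
    (f g : S → ℂ)
    (hW : ∀ x y : S, f (x * y) + μ y * f (σ y * x) = 2 * f x * g y) :
    ∀ x y : S, μ (x * y) * f (σ (x * y)) + μ y * (μ (σ y * x) * f (σ (σ y * x)))
      = 2 * (μ x * f (σ x)) * (μ y * g (σ y)) := by
  intro x y
  have h2 := wilson_I2 σ hσmul hσinv μ hμmul hμ1 f g hW x y
  have h1 := hW y (σ x)
  rw [hσinv] at h1
  -- σ (σ y * x) = y * σ x ; μ (σ y * x) = μ (σ y) * μ x
  have e1 : σ (σ y * x) = y * σ x := by rw [hσmul, hσinv]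
  have e2 : μ (σ y * x) = μ (σ y) * μ x := hμmul (σ y) x
  rw [e1, e2]
  have e3 : μ y * μ (σ y) = 1 := hμ1 y
  have e4 : μ x * μ (σ x) = 1 := hμ1 x
  linear_combination h2 + μ x * h1 + μ x * f (y * σ x) * e3 - f (x * y) * e4

private lemma wilson_g_zero {S : Type*} [Semigroup S]
    (hSq : Subsemigroup.closure {x : S | ∃ y : S, x = y * y} = ⊤)
    (σ : S → S) (hσmul : ∀ x y : S, σ (x * y) = σ x * σ y) (hσinv : ∀ x : S, σ (σ x) = x)
    (μ : S → ℂ) (hμmul : ∀ x y : S, μ (x * y) = μ x * μ y)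
    (hμ0 : ∀ x : S, μ x ≠ 0)
    (f : S → ℂ)
    (hW0 : ∀ x y : S, f (x * y) + μ y * f (σ y * x) = 0) :
    ∀ p : S, f p = 0 := by
  have h2 : ∀ y x : S, f (σ (y * y) * x) = 0 := by
    intro y x
    have a1 := hW0 (x * y) y
    have a2 := hW0 (σ y * x) y
    have a3 := hW0 x (y * y)
    have r1 : σ y * (x * y) = (σ y * x) * y := by rw [mul_assoc]
    have r2 : σ y * (σ y * x) = σ (y * y) * x := by rw [← mul_assoc, ← hσmul]
    have r3 : x * (y * y) = (x * y) * y := by rw [mul_assoc]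
    rw [r1] at a1
    rw [r2] at a2
    rw [r3] at a3
    have e3 : μ (y * y) = μ y * μ y := hμmul y y
    have key : (2 * (μ y * μ y)) * f (σ (y * y) * x) = 0 := by
      linear_combination a3 - a1 + μ y * a2 - f (σ (y * y) * x) * e3
    rcases mul_eq_zero.mp key with h | h
    · exact absurd h (by simp [hμ0 y])
    · exact h
  have h3 : ∀ y x : S, f ((y * y) * x) = 0 := by
    intro y x
    have := h2 (σ y) x
    rwa [hσmul, hσinv] at this
  have h4 : ∀ p : S, ∀ x : S, f (p * x) = 0 := by
    intro p
    have hp : p ∈ Subsemigroup.closure {x : S | ∃ y : S, x = y * y} := by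
      rw [hSq]; trivial
    induction hp using Subsemigroup.closure_induction with
    | mem a ha => obtain ⟨y, rfl⟩ := ha; exact h3 y
    | mul a b _ _ iha _ => intro x; rw [mul_assoc]; exact iha (b * x)
  intro p
  obtain ⟨u, v, rfl⟩ := wilson_aux_prod hSq p
  exact h4 u v

private lemma wilson_gstar {S : Type*} [Semigroup S]
    (σ : S → S) (hσmul : ∀ x y : S, σ (x * y) = σ x * σ y) (hσinv : ∀ x : S, σ (σ x) = x)
    (μ : S → ℂ) (hμmul : ∀ x y : S, μ (x * y) = μ x * μ y)
    (hμ1 : ∀ x : S, μ x * μ (σ x) = 1)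
    (f g : S → ℂ)
    (hW : ∀ x y : S, f (x * y) + μ y * f (σ y * x) = 2 * f x * g y)
    (a : S) (ha : f a ≠ 0) :
    ∀ x : S, μ x * g (σ x) = g x := by
  have E := wilson_E σ hσmul hσinv μ hμmul hμ1 f g hW
  by_cases hdep : ∀ x : S, f x * (μ a * f (σ a)) = f a * (μ x * f (σ x))
  · -- f* proportional to f
    have hc : ∀ x : S, f a * (μ x * f (σ x)) = (μ a * f (σ a)) * f x := by
      intro x; linear_combination -(hdep x)
    have hc2 : (μ a * f (σ a)) * (μ a * f (σ a)) = f a * f a := by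
      have b1 := hc (σ a)
      rw [hσinv] at b1
      have b2 := hμ1 a
      have key : f a * ((μ a * f (σ a)) * (μ a * f (σ a)) - f a * f a) = 0 := by
        linear_combination f a * f a * f a * b2 - f a * μ a * b1 -
          ((μ a * f (σ a)) * (μ a * f (σ a)) - f a * f a) * hdep a
      rcases mul_eq_zero.mp key with h | h
      · exact absurd h ha
      · exact sub_eq_zero.mp h
    have hFa : μ a * f (σ a) ≠ 0 := by
      intro h
      rw [h, zero_mul] at hc2
      exact ha (mul_self_eq_zero.mp hc2.symm)
    intro x
    have w := wilson_Wstar σ hσmul hσinv μ hμmul hμ1 f g hW a x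
    have w2 := hW a x
    have c1 := hc (a * x)
    have c2 := hc (σ x * a)
    have k : (μ a * f (σ a)) * (2 * f a * (μ x * g (σ x)) - 2 * f a * g x) = 0 := by
      linear_combination (μ a * f (σ a)) * w2 + c1 + μ x * c2 - f a * w
    rcases mul_eq_zero.mp k with h | h
    · exact absurd h hFa
    · have h2 : (2 * f a) * (μ x * g (σ x) - g x) = 0 := by linear_combination h
      rcases mul_eq_zero.mp h2 with h3 | h3
      · exact absurd h3 (by simp [ha])
      · exact sub_eq_zero.mp h3
  · push_neg at hdep
    obtain ⟨b, hb⟩ := hdep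
    have hD : f a * (μ b * f (σ b)) - f b * (μ a * f (σ a)) ≠ 0 :=
      sub_ne_zero.mpr (Ne.symm hb)
    have hg : ∀ y : S, (f a * (μ b * f (σ b)) - f b * (μ a * f (σ a))) * g y
        = ((μ b * f (σ b)) * (μ a * g (σ a)) - (μ a * f (σ a)) * (μ b * g (σ b))) * f y
          + ((μ b * f (σ b)) * g a - (μ a * f (σ a)) * g b) * (μ y * f (σ y)) := by
      intro y
      linear_combination (μ b * f (σ b)) * E a y - (μ a * f (σ a)) * E b y
    have hgs : ∀ y : S, (f a * (μ b * f (σ b)) - f b * (μ a * f (σ a))) * (μ y * g (σ y))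
        = ((μ b * f (σ b)) * (μ a * g (σ a)) - (μ a * f (σ a)) * (μ b * g (σ b))) * (μ y * f (σ y))
          + ((μ b * f (σ b)) * g a - (μ a * f (σ a)) * g b) * f y := by
      intro y
      have h1 := hg (σ y)
      rw [hσinv] at h1
      have b2 := hμ1 y
      linear_combination μ y * h1 +
        ((μ b * f (σ b)) * g a - (μ a * f (σ a)) * g b) * f y * b2
    have key : ∀ x y : S,
        (((μ b * f (σ b)) * (μ a * g (σ a)) - (μ a * f (σ a)) * (μ b * g (σ b)))
          - ((μ b * f (σ b)) * g a - (μ a * f (σ a)) * g b))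
        * ((f x - μ x * f (σ x)) * (f y - μ y * f (σ y))) = 0 := by
      intro x y
      linear_combination (f a * (μ b * f (σ b)) - f b * (μ a * f (σ a))) * E x y
        - f x * hg y + (μ y * f (σ y)) * hg x + f y * hgs x - (μ x * f (σ x)) * hgs y
    intro x
    have t0 : (f a * (μ b * f (σ b)) - f b * (μ a * f (σ a))) * (g x - μ x * g (σ x))
        = (((μ b * f (σ b)) * (μ a * g (σ a)) - (μ a * f (σ a)) * (μ b * g (σ b)))
          - ((μ b * f (σ b)) * g a - (μ a * f (σ a)) * g b)) * (f x - μ x * f (σ x)) := by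
      linear_combination hg x - hgs x
    have sq : ((f a * (μ b * f (σ b)) - f b * (μ a * f (σ a))) * (g x - μ x * g (σ x)))
        * ((f a * (μ b * f (σ b)) - f b * (μ a * f (σ a))) * (g x - μ x * g (σ x))) = 0 := by
      rw [t0]
      linear_combination (((μ b * f (σ b)) * (μ a * g (σ a)) - (μ a * f (σ a)) * (μ b * g (σ b)))
          - ((μ b * f (σ b)) * g a - (μ a * f (σ a)) * g b)) * key x x
    have ht := mul_self_eq_zero.mp sq
    rcases mul_eq_zero.mp ht with h | h
    · exact absurd h hD
    · exact (sub_eq_zero.mp h).symm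

/-- Theorem 4.2: classification of the solutions of the variant of Wilson's functional
equation `f(xy) + μ(y)f(σ(y)x) = 2f(x)g(y)` on a semigroup generated by its squares. -/
theorem wilson_variant_first_equation_solutions
{S : Type*} [Semigroup S]
    (hSq : Subsemigroup.closure {x : S | ∃ y : S, x = y * y} = ⊤)
    (σ : S → S) (hσmul : ∀ x y : S, σ (x * y) = σ x * σ y) (hσinv : ∀ x : S, σ (σ x) = x)
    (μ : S → ℂ) (hμmul : ∀ x y : S, μ (x * y) = μ x * μ y) (hμσ : ∀ x : S, μ (x * σ x) = 1)
    (f g : S → ℂ) :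
    (∀ x y : S, f (x * y) + μ y * f (σ y * x) = 2 * f x * g y) ↔
      (f = 0) ∨
      (∃ χ : S → ℂ, (∀ x y : S, χ (x * y) = χ x * χ y) ∧ χ ≠ 0 ∧
        ∃ lam del : ℂ, (lam, del) ≠ (0, 0) ∧
          (∀ x : S, f x = lam * χ x + del * (μ x * χ (σ x))) ∧
          (∀ x : S, g x = (χ x + μ x * χ (σ x)) / 2)) ∨
      (∃ χ : S → ℂ, (∀ x y : S, χ (x * y) = χ x * χ y) ∧ χ ≠ 0 ∧
        (∀ x : S, μ x * χ (σ x) = χ x) ∧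
        ∃ c : ℂ, ∃ A : S → ℂ,
          (∀ x y : S, χ x ≠ 0 → χ y ≠ 0 → A (x * y) = A x + A y) ∧
          (∃ x : S, χ x ≠ 0 ∧ A x ≠ 0) ∧
          (∀ x : S, χ x ≠ 0 → A (σ x) = -A x) ∧
          (∀ x : S, χ x ≠ 0 → f x = χ x * (c + A x)) ∧
          (∀ x : S, χ x = 0 → f x = 0) ∧
          (∀ x : S, χ x ≠ 0 → g x = χ x) ∧
          (∀ x : S, χ x = 0 → g x = 0)) := by
  have hμ1 : ∀ x : S, μ x * μ (σ x) = 1 := fun x => (hμmul x (σ x)).symm.trans (hμσ x)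
  have hμ0 : ∀ x : S, μ x ≠ 0 := fun x => left_ne_zero_of_mul_eq_one (hμ1 x)
  constructor
  · -- FORWARD DIRECTION
    intro hW
    by_cases hf : f = 0
    · exact Or.inl hf
    right
    obtain ⟨a, ha⟩ : ∃ a : S, f a ≠ 0 := by
      by_contra h
      push_neg at h
      exact hf (funext fun x => h x)
    have L1 : ∀ x : S, μ x * g (σ x) = g x :=
      wilson_gstar σ hσmul hσinv μ hμmul hμ1 f g hW a ha
    obtain ⟨y0, hy0⟩ : ∃ y0 : S, g y0 ≠ 0 := by
      by_contra h
      push_neg at h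
      have hW0 : ∀ x y : S, f (x * y) + μ y * f (σ y * x) = 0 := by
        intro x y; rw [hW x y, h y, mul_zero]
      exact ha (wilson_g_zero hSq σ hσmul hσinv μ hμmul hμ0 f hW0 a)
    have hWs := wilson_Wstar σ hσmul hσinv μ hμmul hμ1 f g hW
    have I1 := wilson_I1 σ hσmul hσinv μ hμmul hμ1 f g hW
    have I2 := wilson_I2 σ hσmul hσinv μ hμmul hμ1 f g hW
    -- sine-type law for the odd part (times 2)
    have hsine0 : ∀ x y : S, f (x * y) - μ (x * y) * f (σ (x * y))
        = (f x - μ x * f (σ x)) * g y + (f y - μ y * f (σ y)) * g x := by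
      intro x y
      have i1 := I1 x y
      have i2 := I2 x y
      rw [L1 x, L1 y] at i2
      linear_combination (i1 - i2) / 2
    -- Wilson equation for the (doubled) even part
    have hWfe : ∀ x y : S, (f (x * y) + μ (x * y) * f (σ (x * y)))
        + μ y * (f (σ y * x) + μ (σ y * x) * f (σ (σ y * x)))
        = 2 * (f x + μ x * f (σ x)) * g y := by
      intro x y
      have w := hWs x y
      rw [L1 y] at w
      linear_combination hW x y + w
    have heven : ∀ z : S, μ z * (f (σ z) + μ (σ z) * f (σ (σ z))) = f z + μ z * f (σ z) := by
      intro z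
      rw [hσinv]
      linear_combination f z * hμ1 z
    have hfe_eq : ∀ x y : S, (f x + μ x * f (σ x)) * g y = (f y + μ y * f (σ y)) * g x := by
      intro x y
      have i1fe := wilson_I1 σ hσmul hσinv μ hμmul hμ1
        (fun z => f z + μ z * f (σ z)) g hWfe x y
      linear_combination -(i1fe + heven (x * y)) / 2 + g x * heven y
    obtain ⟨c, hfe⟩ : ∃ cc : ℂ, ∀ x : S, f x + μ x * f (σ x) = 2 * cc * g x := by
      refine ⟨(f y0 + μ y0 * f (σ y0)) / (2 * g y0), fun x => ?_⟩
      field_simp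
      linear_combination hfe_eq x y0
    have hfo_sine : ∀ x y : S, f (x * y) - c * g (x * y)
        = (f x - c * g x) * g y + (f y - c * g y) * g x := by
      intro x y
      linear_combination (hsine0 x y + hfe (x * y) - g y * hfe x - g x * hfe y) / 2
    have hfo_odd : ∀ x : S, μ x * (f (σ x) - c * g (σ x)) = -(f x - c * g x) := by
      intro x
      linear_combination hfe x - c * L1 x
    by_cases hfo : ∀ x : S, f x = c * g x
    · -- f = c·g : d'Alembert case
      have hc0 : c ≠ 0 := by
        intro h
        exact hf (funext fun x => by rw [hfo x, h, zero_mul]; rfl)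
      have hD : ∀ x y : S, g (x * y) + μ y * g (σ y * x) = 2 * g x * g y := by
        intro x y
        have w := hW x y
        rw [hfo (x * y), hfo (σ y * x), hfo x] at w
        have h2 : c * (g (x * y) + μ y * g (σ y * x) - 2 * g x * g y) = 0 := by
          linear_combination w
        rcases mul_eq_zero.mp h2 with h | h
        · exact absurd h hc0
        · linear_combination h
      by_cases hmul : ∀ p q : S, g (p * q) = g p * g q
      · -- g multiplicative : χ = g
        refine Or.inl ⟨g, hmul, ?_, c, 0, ?_, ?_, ?_⟩
        · intro h; exact hy0 (congrFun h y0)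
        · intro hpr
          exact hc0 (by simpa using congrArg Prod.fst hpr)
        · intro x; rw [hfo x]; ring
        · intro x; rw [L1 x]; ring
      · -- g not multiplicative
        push_neg at hmul
        obtain ⟨p, q, hpq⟩ := hmul
        have D3 : ∀ x y z : S, g (x * (y * z)) = g (x * y) * g z + g (x * z) * g y
            + g (y * z) * g x - 2 * g x * g y * g z := by
          intro x y z
          have d1 := hD (x * y) z
          have d2 := hD (σ z * x) y
          have d3 := hD x z
          have d4 := hD x (y * z)
          have r1 : σ z * (x * y) = (σ z * x) * y := (mul_assoc _ _ _).symm
          have r2 : σ y * (σ z * x) = σ (y * z) * x := by rw [← mul_assoc, ← hσmul]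
          have r3 : (x * y) * z = x * (y * z) := mul_assoc _ _ _
          rw [r3, r1] at d1
          rw [r2] at d2
          have e := hμmul y z
          linear_combination (d1 - μ z * d2 - 2 * g y * d3 + d4 - g (σ (y * z) * x) * e) / 2
        have hw_sine : ∀ x y : S, g ((x * y) * q) - g (x * y) * g q
            = (g (x * q) - g x * g q) * g y + (g (y * q) - g y * g q) * g x := by
          intro x y
          have d := D3 x y q
          have r : (x * y) * q = x * (y * q) := mul_assoc _ _ _
          rw [r]
          linear_combination d
        have hwp : g (p * q) - g p * g q ≠ 0 := sub_ne_zero.mpr hpq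
        obtain ⟨κ, hκ⟩ := wilson_aux_sine g (fun x => g (x * q) - g x * g q) hw_sine p hwp
        have hne : κ * ((g (p * q) - g p * g q) * (g (q * q) - g q * g q)) ≠ 0 := by
          intro h
          apply hpq
          have := hκ p q
          rw [h, add_zero] at this
          exact this
        have hκ0 : κ ≠ 0 := fun h => hne (by rw [h, zero_mul])
        have hwq : g (q * q) - g q * g q ≠ 0 := by
          intro h
          exact hne (by rw [h, mul_zero, mul_zero])
        have hκwq : κ * (g (q * q) - g q * g q) = 1 := by
          have k := hκ q q
          have h2 : (g (q * q) - g q * g q) * (κ * (g (q * q) - g q * g q) - 1) = 0 := by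
            linear_combination -k
          rcases mul_eq_zero.mp h2 with h | h
          · exact absurd h hwq
          · linear_combination h
        have hwodd : ∀ x : S, μ x * (g (σ x * q) - g (σ x) * g q)
            = -(g (x * q) - g x * g q) := by
          intro x
          have d := hD q x
          have k := hκ q x
          have l := L1 x
          linear_combination d - g q * l - k - (g (x * q) - g x * g q) * hκwq
        obtain ⟨s, hs⟩ := IsAlgClosed.exists_pow_nat_eq κ (n := 2) two_pos
        have hs0 : s ≠ 0 := by
          intro h
          rw [h] at hs
          exact hκ0 (by simpa using hs.symm)
        have hχstar : ∀ x : S, μ x * (g (σ x) + s * (g (σ x * q) - g (σ x) * g q))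
            = g x - s * (g (x * q) - g x * g q) := by
          intro x
          linear_combination L1 x + s * hwodd x
        refine Or.inl ⟨fun x => g x + s * (g (x * q) - g x * g q), ?_, ?_, c / 2, c / 2,
          ?_, ?_, ?_⟩
        · intro x y
          linear_combination hκ x y + s * hw_sine x y
            - ((g (x * q) - g x * g q) * (g (y * q) - g y * g q)) * hs
        · intro h0
          apply hy0
          have h1 := congrFun h0 y0
          have h2 := congrFun h0 (σ y0)
          simp only [Pi.zero_apply] at h1 h2
          have h3 := hχstar y0
          rw [h2, mul_zero] at h3
          linear_combination (h1 - h3) / 2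
        · intro hpr
          have h1 : c / 2 = 0 := by simpa using congrArg Prod.fst hpr
          exact hc0 (by linear_combination 2 * h1)
        · intro x
          rw [hχstar x, hfo x]
          ring
        · intro x
          rw [hχstar x]
          ring
    · -- the odd part is nonzero
      push_neg at hfo
      obtain ⟨p, hp0⟩ := hfo
      have hp : f p - c * g p ≠ 0 := sub_ne_zero.mpr hp0
      obtain ⟨κ, hκ⟩ := wilson_aux_sine g (fun x => f x - c * g x) hfo_sine p hp
      by_cases hκ0 : κ = 0
      · -- case 3 : g multiplicative and f = g·(c + A)
        have hgmul : ∀ x y : S, g (x * y) = g x * g y := by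
          intro x y
          have := hκ x y
          rw [hκ0, zero_mul, add_zero] at this
          exact this
        have hvanish : ∀ x : S, g x = 0 → f x - c * g x = 0 := by
          intro x hx
          obtain ⟨u, v, rfl, hu, hv⟩ := wilson_aux_factor hSq g hgmul x hx
          have hs := hfo_sine u v
          rw [hu, hv, mul_zero, mul_zero, add_zero] at hs
          exact hs
        have hgp : g p ≠ 0 := fun h => hp (hvanish p h)
        refine Or.inr ⟨g, hgmul, fun h => hy0 (congrFun h y0), L1, c,
          fun x => (f x - c * g x) / g x, ?_, ⟨p, hgp, div_ne_zero hp hgp⟩, ?_, ?_, ?_,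
          fun _ _ => rfl, fun _ h => h⟩
        · intro x y hx hy
          have hxy : g (x * y) = g x * g y := hgmul x y
          have hsin := hfo_sine x y
          show (f (x * y) - c * g (x * y)) / g (x * y)
            = (f x - c * g x) / g x + (f y - c * g y) / g y
          rw [hxy] at hsin ⊢
          field_simp
          linear_combination hsin
        · intro x hx
          have l := L1 x
          have o := hfo_odd x
          have hgσ : g (σ x) ≠ 0 := by
            intro h
            rw [h, mul_zero] at l
            exact hx l.symm
          show (f (σ x) - c * g (σ x)) / g (σ x) = -((f x - c * g x) / g x)
          field_simp
          linear_combination g (σ x) * o + (c * g (σ x) - f (σ x)) * l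
        · intro x hx
          show f x = g x * (c + (f x - c * g x) / g x)
          field_simp
          ring
        · intro x hx
          have := hvanish x hx
          rw [hx, mul_zero, sub_zero] at this
          exact this
      · -- case 2 : χ = g + s·(f - c·g)
        obtain ⟨s, hs⟩ := IsAlgClosed.exists_pow_nat_eq κ (n := 2) two_pos
        have hs0 : s ≠ 0 := by
          intro h
          rw [h] at hs
          exact hκ0 (by simpa using hs.symm)
        have hχstar : ∀ x : S, μ x * (g (σ x) + s * (f (σ x) - c * g (σ x)))
            = g x - s * (f x - c * g x) := by
          intro x
          linear_combination L1 x + s * hfo_odd x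
        refine Or.inl ⟨fun x => g x + s * (f x - c * g x), ?_, ?_,
          c / 2 + 1 / (2 * s), c / 2 - 1 / (2 * s), ?_, ?_, ?_⟩
        · intro x y
          linear_combination hκ x y + s * hfo_sine x y
            - ((f x - c * g x) * (f y - c * g y)) * hs
        · intro h0
          apply hy0
          have h1 := congrFun h0 y0
          have h2 := congrFun h0 (σ y0)
          simp only [Pi.zero_apply] at h1 h2
          have h3 := hχstar y0
          rw [h2, mul_zero] at h3
          linear_combination (h1 - h3) / 2
        · intro hpr
          have h1 : c / 2 + 1 / (2 * s) = 0 := by simpa using congrArg Prod.fst hpr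
          have h2 : c / 2 - 1 / (2 * s) = 0 := by simpa using congrArg Prod.snd hpr
          have h3 : (1 : ℂ) / s = 0 := by linear_combination h1 - h2
          exact one_div_ne_zero hs0 h3
        · intro x
          rw [hχstar x]
          field_simp
          ring
        · intro x
          rw [hχstar x]
          ring
  · -- BACKWARD DIRECTION
    rintro (rfl | ⟨χ, hχmul, hχ0, lam, del, hld, hfeq, hgeq⟩ |
      ⟨χ, hχmul, hχ0, hχstar, c, A, hAadd, ⟨a0, ha0, hA0⟩, hAσ, hf1, hf2, hg1, hg2⟩)
    · intro x y; simp
    · intro x y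
      rw [hfeq (x * y), hfeq (σ y * x), hfeq x, hgeq y]
      rw [hχmul x y, hχmul (σ y) x, hμmul x y, hμmul (σ y) x, hσmul x y, hσmul (σ y) x,
        hσinv y, hχmul (σ x) (σ y), hχmul y (σ x)]
      linear_combination (del * μ x * χ (σ x) * χ y) * hμ1 y
    · intro x y
      by_cases hcy : χ y = 0
      · have hgy : g y = 0 := hg2 y hcy
        have hσy : χ (σ y) = 0 := by
          have := hχstar y; rw [hcy] at this
          exact (mul_eq_zero.mp this).resolve_left (hμ0 y)
        have h1 : f (x * y) = 0 := hf2 _ (by rw [hχmul, hcy, mul_zero])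
        have h2 : f (σ y * x) = 0 := hf2 _ (by rw [hχmul, hσy, zero_mul])
        rw [h1, h2, hgy]; ring
      · have hσy : χ (σ y) ≠ 0 := by
          intro h
          exact hcy (by rw [← hχstar y, h, mul_zero])
        by_cases hcx : χ x = 0
        · have h1 : f (x * y) = 0 := hf2 _ (by rw [hχmul, hcx, zero_mul])
          have h2 : f (σ y * x) = 0 := hf2 _ (by rw [hχmul, hcx, mul_zero])
          have h3 : f x = 0 := hf2 _ hcx
          rw [h1, h2, h3]; ring
        · have hxy : χ (x * y) ≠ 0 := by rw [hχmul]; exact mul_ne_zero hcx hcy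
          have hσyx : χ (σ y * x) ≠ 0 := by rw [hχmul]; exact mul_ne_zero hσy hcx
          rw [hf1 _ hxy, hf1 _ hσyx, hf1 _ hcx, hg1 _ hcy,
            hAadd x y hcx hcy, hAadd (σ y) x hσy hcx, hAσ y hcy,
            hχmul x y, hχmul (σ y) x]
          linear_combination (χ x * (c - A y + A x)) * hχstar y
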